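/- Let t = sl_2 × a (a abelian) act on a module M lying in a category O-type setting, and suppose M = ⊕_μ [M : L_t(μ)] L_t(μ) at the level of characters. Then the following are equivalent for the negative root vector f of the sl_2 factor with root γ: (a) f acts locally nilpotently on M; (b) (e^{γ/2} − e^{−γ/2}) ch M is anti-invariant under s_γ, i.e. s_γ((e^{γ/2} − e^{−γ/2}) ch M) = −(e^{γ/2} − e^{−γ/2}) ch M. -/

import Mathlib

open Module Finset

section Stmt12Aux

variable {M : Type*} [AddCommGroup M] [Module ℂ M]

private lemma pow_apply_zero_mono {X : Module.End ℂ M} {v : M} {n m : ℕ}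
    (h : (X ^ n) v = 0) (hnm : n ≤ m) : (X ^ m) v = 0 := by
  obtain ⟨k, rfl⟩ := Nat.exists_eq_add_of_le hnm
  rw [add_comm, pow_add, Module.End.mul_apply, h, map_zero]

noncomputable def expAux (X : Module.End ℂ M) (n : ℕ) (v : M) : M :=
  ∑ k ∈ Finset.range n, ((k.factorial : ℂ))⁻¹ • (X ^ k) v

private lemma expAux_congr {X : Module.End ℂ M} {v : M} {n m : ℕ}
    (h : (X ^ n) v = 0) (hnm : n ≤ m) : expAux X m v = expAux X n v := by
  refine (Finset.sum_subset (Finset.range_subset_range.2 hnm) fun k _ hk => ?_).symm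
  rw [Finset.mem_range, not_lt] at hk
  rw [pow_apply_zero_mono h hk, smul_zero]

private lemma expAux_choose_eq {X : Module.End ℂ M} (h : ∀ v : M, ∃ n, (X ^ n) v = 0)
    {v : M} {n : ℕ} (hn : (X ^ n) v = 0) :
    expAux X (Classical.choose (h v)) v = expAux X n v := by
  have hm := Classical.choose_spec (h v)
  rw [← expAux_congr hm (le_max_left _ n), expAux_congr hn (le_max_right (Classical.choose (h v)) n)]

noncomputable def lnExp (X : Module.End ℂ M) (h : ∀ v : M, ∃ n, (X ^ n) v = 0) :
    Module.End ℂ M where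
  toFun v := expAux X (Classical.choose (h v)) v
  map_add' v w := by
    show expAux X _ (v + w) = expAux X _ v + expAux X _ w
    obtain ⟨n₁, hn₁⟩ := h v
    obtain ⟨n₂, hn₂⟩ := h w
    have hv : (X ^ max n₁ n₂) v = 0 := pow_apply_zero_mono hn₁ (le_max_left _ _)
    have hw : (X ^ max n₁ n₂) w = 0 := pow_apply_zero_mono hn₂ (le_max_right _ _)
    have hvw : (X ^ max n₁ n₂) (v + w) = 0 := by rw [map_add, hv, hw, add_zero]
    rw [expAux_choose_eq h hvw, expAux_choose_eq h hv, expAux_choose_eq h hw]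
    unfold expAux
    rw [← Finset.sum_add_distrib]
    exact Finset.sum_congr rfl fun k _ => by rw [map_add, smul_add]
  map_smul' c v := by
    show expAux X _ (c • v) = c • expAux X _ v
    obtain ⟨n, hn⟩ := h v
    have hcv : (X ^ n) (c • v) = 0 := by rw [map_smul, hn, smul_zero]
    rw [expAux_choose_eq h hcv, expAux_choose_eq h hn]
    unfold expAux
    rw [Finset.smul_sum]
    exact Finset.sum_congr rfl fun k _ => by rw [map_smul, smul_comm]

lemma lnExp_apply {X : Module.End ℂ M} (h : ∀ v : M, ∃ n, (X ^ n) v = 0)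
    {v : M} {n : ℕ} (hn : (X ^ n) v = 0) : lnExp X h v = expAux X n v :=
  expAux_choose_eq h hn

lemma lnExp_injective (X : Module.End ℂ M) (h : ∀ v : M, ∃ n, (X ^ n) v = 0) :
    Function.Injective (lnExp X h) := by
  classical
  have key : ∀ v : M, lnExp X h v = 0 → v = 0 := by
    intro v hv0
    by_contra hv
    have hfind := Nat.find_spec (h v)
    rcases Nat.eq_zero_or_pos (Nat.find (h v)) with h0 | hpos
    · exact hv (by simpa [h0] using hfind)
    obtain ⟨k, hk⟩ := Nat.exists_eq_succ_of_ne_zero hpos.ne'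
    have hkmin : ¬ (X ^ k) v = 0 := Nat.find_min (h v) (by omega)
    have hcalc : (X ^ k) (lnExp X h v) = (X ^ k) v := by
      have hk1 : (X ^ (k + 1)) v = 0 := by rw [← Nat.succ_eq_add_one, ← hk]; exact hfind
      rw [lnExp_apply h hk1]
      unfold expAux
      rw [map_sum]
      simp only [map_smul]
      have : ∀ j ∈ Finset.range (k + 1), j ≠ 0 →
          ((j.factorial : ℂ))⁻¹ • (X ^ k) ((X ^ j) v) = 0 := by
        intro j _ hj
        have h2 : (X ^ (k + j)) v = 0 := pow_apply_zero_mono hk1 (by omega)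
        rw [← Module.End.mul_apply, ← pow_add, h2, smul_zero]
      rw [Finset.sum_eq_single 0 this (by simp)]
      simp
    rw [hv0, map_zero] at hcalc
    exact hkmin hcalc.symm
  intro a b hab
  have : lnExp X h (a - b) = 0 := by rw [map_sub, hab, sub_self]
  exact sub_eq_zero.mp (key _ this)


private lemma pow_comm1 (X Y : Module.End ℂ M) (c : ℂ)
    (hc : X * Y = Y * X + c • X) (k : ℕ) :
    X ^ k * Y = Y * X ^ k + (c * k) • X ^ k := by
  induction k with
  | zero => simp
  | succ k ih =>
    calc X ^ (k+1) * Y = X * (X ^ k * Y) := by rw [pow_succ', mul_assoc]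
    _ = X * (Y * X ^ k) + (c * k) • (X * X ^ k) := by rw [ih, mul_add, mul_smul_comm]
    _ = (Y * X + c • X) * X ^ k + (c * k) • X ^ (k+1) := by rw [← mul_assoc, hc, ← pow_succ']
    _ = Y * X ^ (k+1) + (c * (k+1 : ℕ)) • X ^ (k+1) := by
        rw [add_mul, smul_mul_assoc, mul_assoc, ← pow_succ']
        push_cast
        module

private lemma pow_comm2_succ (X Y Z : Module.End ℂ M) (c : ℂ)
    (hYZ : X * Y = Y * X + Z) (hZ : X * Z = Z * X + c • X) (k : ℕ) :
    X ^ (k+1) * Y = Y * X ^ (k+1) + ((k:ℂ)+1) • (Z * X ^ k)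
      + (c * ((k:ℂ)+1) * k / 2) • X ^ k := by
  induction k with
  | zero => simpa using hYZ
  | succ k ih =>
    push_cast
    calc X ^ (k+1+1) * Y = X * (X ^ (k+1) * Y) := by rw [pow_succ', mul_assoc]
    _ = X * (Y * X ^ (k+1)) + ((k:ℂ)+1) • (X * (Z * X ^ k))
          + (c * ((k:ℂ)+1) * k / 2) • (X * X ^ k) := by
        rw [ih, mul_add, mul_add, mul_smul_comm, mul_smul_comm]
    _ = (Y * X + Z) * X ^ (k+1) + ((k:ℂ)+1) • ((Z * X + c • X) * X ^ k)
          + (c * ((k:ℂ)+1) * k / 2) • X ^ (k+1) := by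
        rw [← mul_assoc, hYZ, ← mul_assoc, hZ, ← pow_succ']
    _ = (Y * X ^ (k+1+1) + Z * X ^ (k+1)) + ((k:ℂ)+1) • (Z * X ^ (k+1) + c • X ^ (k+1))
          + (c * ((k:ℂ)+1) * k / 2) • X ^ (k+1) := by
        rw [add_mul, mul_assoc, ← pow_succ', add_mul, mul_assoc, ← pow_succ', smul_mul_assoc,
          ← pow_succ']
    _ = Y * X ^ (k+1+1) + ((k:ℂ)+1+1) • (Z * X ^ (k+1))
          + (c * ((k:ℂ)+1+1) * ((k:ℂ)+1) / 2) • X ^ (k+1) := by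
        match_scalars <;> ring

private lemma pow_comm2 (X Y Z : Module.End ℂ M) (c : ℂ)
    (hYZ : X * Y = Y * X + Z) (hZ : X * Z = Z * X + c • X) (k : ℕ) :
    X ^ k * Y = Y * X ^ k + (k : ℂ) • (Z * X ^ (k-1))
      + (c * k * ((k:ℂ) - 1) / 2) • X ^ (k-1) := by
  rcases k with _ | k
  · simp
  · have := pow_comm2_succ X Y Z c hYZ hZ k
    rw [this]
    have h2 : (k+1) - 1 = k := rfl
    rw [h2]
    push_cast
    match_scalars <;> ring

private lemma sum_aux1 {X : Module.End ℂ M} {v : M} {n : ℕ} (hn : (X ^ n) v = 0) :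
    ∑ j ∈ Finset.range (n+1), ((j:ℂ) * ((j.factorial : ℂ))⁻¹) • (X ^ j) v
      = X (∑ j ∈ Finset.range (n+1), ((j.factorial : ℂ))⁻¹ • (X ^ j) v) := by
  rw [map_sum]
  simp only [map_smul, ← Module.End.mul_apply X (X ^ _), ← pow_succ']
  rw [Finset.sum_range_succ']
  rw [Finset.sum_range_succ]
  rw [pow_apply_zero_mono hn n.le_succ, smul_zero, add_zero]
  simp only [Nat.cast_zero, zero_mul, zero_smul, add_zero]
  refine Finset.sum_congr rfl fun j _ => ?_
  congr 1
  rw [Nat.factorial_succ]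
  push_cast
  have hf : ((j.factorial : ℂ)) ≠ 0 := Nat.cast_ne_zero.2 j.factorial_ne_zero
  have hj : ((j:ℂ) + 1) ≠ 0 := by
    have : (((j+1 : ℕ)) : ℂ) ≠ 0 := Nat.cast_ne_zero.2 (Nat.succ_ne_zero j)
    push_cast at this
    exact this
  field_simp

private lemma sum_aux2 {X : Module.End ℂ M} {v : M} {n : ℕ} (hn : (X ^ n) v = 0) :
    ∑ j ∈ Finset.range (n+1), ((j:ℂ) * ((j.factorial : ℂ))⁻¹) • (X ^ (j-1)) v
      = ∑ j ∈ Finset.range (n+1), ((j.factorial : ℂ))⁻¹ • (X ^ j) v := by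
  rw [Finset.sum_range_succ']
  rw [Finset.sum_range_succ]
  rw [hn, smul_zero, add_zero]
  simp only [Nat.cast_zero, zero_mul, zero_smul, add_zero]
  refine Finset.sum_congr rfl fun j _ => ?_
  rw [Nat.add_sub_cancel]
  congr 1
  rw [Nat.factorial_succ]
  push_cast
  have hf : ((j.factorial : ℂ)) ≠ 0 := Nat.cast_ne_zero.2 j.factorial_ne_zero
  have hj : ((j:ℂ) + 1) ≠ 0 := by
    have : (((j+1 : ℕ)) : ℂ) ≠ 0 := Nat.cast_ne_zero.2 (Nat.succ_ne_zero j)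
    push_cast at this
    exact this
  field_simp

private lemma sum_aux3 {X : Module.End ℂ M} {v : M} {n : ℕ} (hn : (X ^ n) v = 0) :
    ∑ j ∈ Finset.range (n+1), ((j:ℂ) * ((j:ℂ) - 1) * ((j.factorial : ℂ))⁻¹) • (X ^ (j-1)) v
      = X (∑ j ∈ Finset.range (n+1), ((j.factorial : ℂ))⁻¹ • (X ^ j) v) := by
  rcases n with _ | m
  · have hv : v = 0 := by simpa using hn
    subst hv
    simp
  · rw [map_sum]
    simp only [map_smul, ← Module.End.mul_apply X (X ^ _), ← pow_succ']
    -- RHS : ∑ j ∈ range (m+2), (j!⁻¹) • X^(j+1) v ; peel the top two terms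
    conv_rhs => rw [Finset.sum_range_succ, Finset.sum_range_succ]
    rw [pow_apply_zero_mono hn (by omega : m + 1 ≤ m + 1 + 1), smul_zero, add_zero,
      pow_apply_zero_mono hn (by omega : m + 1 ≤ m + 1), smul_zero, add_zero]
    -- LHS : peel the bottom two terms
    conv_lhs => rw [Finset.sum_range_succ', Finset.sum_range_succ']
    have h0 : (((0:ℕ):ℂ) * (((0:ℕ):ℂ) - 1) * (((Nat.factorial 0) : ℂ))⁻¹) • (X ^ ((0:ℕ)-1)) v
        = (0:M) := by norm_num
    have h1 : ((((0+1:ℕ)):ℂ) * ((((0+1:ℕ)):ℂ) - 1) * ((((0+1:ℕ)).factorial : ℂ))⁻¹)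
        • (X ^ ((0+1:ℕ)-1)) v = (0:M) := by norm_num
    rw [h0, add_zero, h1, add_zero]
    refine Finset.sum_congr rfl fun i _ => ?_
    have h2 : (i + 1 + 1) - 1 = i + 1 := rfl
    rw [h2]
    have h3 : X ^ (i+1) = X * X ^ i := pow_succ' X i
    rw [h3, Module.End.mul_apply]
    congr 1
    rw [Nat.factorial_succ, Nat.factorial_succ]
    push_cast
    have hf : ((i.factorial : ℂ)) ≠ 0 := Nat.cast_ne_zero.2 i.factorial_ne_zero
    have hj : ((i:ℂ) + 1) ≠ 0 := by
      have : (((i+1 : ℕ)) : ℂ) ≠ 0 := Nat.cast_ne_zero.2 (Nat.succ_ne_zero i)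
      push_cast at this
      exact this
    have hj2 : ((i:ℂ) + 1 + 1) ≠ 0 := by
      have : (((i+2 : ℕ)) : ℂ) ≠ 0 := Nat.cast_ne_zero.2 (by omega)
      push_cast at this
      convert this using 1
      ring
    field_simp
    ring

lemma lnExp_comm1 {X : Module.End ℂ M} (h : ∀ v : M, ∃ n, (X ^ n) v = 0)
    (Y : Module.End ℂ M) (c : ℂ) (hc : X * Y = Y * X + c • X) :
    lnExp X h * Y = (Y + c • X) * lnExp X h := by
  apply LinearMap.ext
  intro v
  rw [Module.End.mul_apply, Module.End.mul_apply]
  obtain ⟨n, hn⟩ := h v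
  have hn1 : (X ^ (n+1)) v = 0 := pow_apply_zero_mono hn n.le_succ
  have hYv : (X ^ (n+1)) (Y v) = 0 := by
    rw [← Module.End.mul_apply, pow_comm1 X Y c hc (n+1), LinearMap.add_apply,
      Module.End.mul_apply, hn1, map_zero, LinearMap.smul_apply, hn1, smul_zero, add_zero]
  rw [lnExp_apply h hYv, lnExp_apply h hn1, LinearMap.add_apply, LinearMap.smul_apply]
  unfold expAux
  have key : ∀ j ∈ Finset.range (n+1),
      ((j.factorial:ℂ))⁻¹ • (X ^ j) (Y v)
        = ((j.factorial:ℂ))⁻¹ • Y ((X ^ j) v)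
          + c • (((j:ℂ) * ((j.factorial:ℂ))⁻¹) • (X ^ j) v) := by
    intro j _
    rw [← Module.End.mul_apply, pow_comm1 X Y c hc j, LinearMap.add_apply, Module.End.mul_apply,
      LinearMap.smul_apply, smul_add]
    match_scalars <;> ring
  rw [Finset.sum_congr rfl key, Finset.sum_add_distrib]
  congr 1
  · rw [map_sum]
    exact Finset.sum_congr rfl fun j _ => (map_smul Y _ _).symm
  · rw [← Finset.smul_sum, sum_aux1 hn]

lemma lnExp_comm2 {X : Module.End ℂ M} (h : ∀ v : M, ∃ n, (X ^ n) v = 0)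
    (Y Z : Module.End ℂ M) (c : ℂ)
    (hYZ : X * Y = Y * X + Z) (hZ : X * Z = Z * X + c • X) :
    lnExp X h * Y = (Y + Z + (c/2) • X) * lnExp X h := by
  apply LinearMap.ext
  intro v
  rw [Module.End.mul_apply, Module.End.mul_apply]
  obtain ⟨n, hn⟩ := h v
  have hn1 : (X ^ (n+1)) v = 0 := pow_apply_zero_mono hn n.le_succ
  have hYv : (X ^ (n+1)) (Y v) = 0 := by
    rw [← Module.End.mul_apply, pow_comm2 X Y Z c hYZ hZ (n+1)]
    simp only [Nat.add_sub_cancel]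
    rw [LinearMap.add_apply, LinearMap.add_apply, Module.End.mul_apply, hn1, map_zero,
      LinearMap.smul_apply, Module.End.mul_apply, hn, map_zero, smul_zero,
      LinearMap.smul_apply, hn, smul_zero, add_zero, add_zero]
  rw [lnExp_apply h hYv, lnExp_apply h hn1, LinearMap.add_apply, LinearMap.add_apply,
    LinearMap.smul_apply]
  unfold expAux
  have key : ∀ j ∈ Finset.range (n+1),
      ((j.factorial:ℂ))⁻¹ • (X ^ j) (Y v)
        = ((j.factorial:ℂ))⁻¹ • Y ((X ^ j) v)
          + ((j:ℂ) * ((j.factorial:ℂ))⁻¹) • Z ((X ^ (j-1)) v)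
          + (c/2) • (((j:ℂ) * ((j:ℂ) - 1) * ((j.factorial:ℂ))⁻¹) • (X ^ (j-1)) v) := by
    intro j _
    rw [← Module.End.mul_apply, pow_comm2 X Y Z c hYZ hZ j, LinearMap.add_apply,
      LinearMap.add_apply, Module.End.mul_apply, LinearMap.smul_apply, Module.End.mul_apply,
      LinearMap.smul_apply, smul_add, smul_add]
    match_scalars <;> ring
  rw [Finset.sum_congr rfl key, Finset.sum_add_distrib, Finset.sum_add_distrib]
  congr 1
  congr 1
  · rw [map_sum]
    exact Finset.sum_congr rfl fun j _ => (map_smul Y _ _).symm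
  · calc ∑ j ∈ Finset.range (n+1), ((j:ℂ) * ((j.factorial:ℂ))⁻¹) • Z ((X ^ (j-1)) v)
        = Z (∑ j ∈ Finset.range (n+1), ((j:ℂ) * ((j.factorial:ℂ))⁻¹) • (X ^ (j-1)) v) := by
          rw [map_sum]
          exact Finset.sum_congr rfl fun j _ => (map_smul Z _ _).symm
    _ = Z (∑ j ∈ Finset.range (n+1), ((j.factorial:ℂ))⁻¹ • (X ^ j) v) := by
          rw [sum_aux2 hn]
  · rw [← Finset.smul_sum, sum_aux3 hn]


lemma weyl_symmetry (E F H : Module.End ℂ M)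
    (hHE : ⁅H, E⁆ = (2 : ℂ) • E) (hHF : ⁅H, F⁆ = (-2 : ℂ) • F) (hEF : ⁅E, F⁆ = H)
    (hfd : ∀ c : ℂ, FiniteDimensional ℂ (Module.End.eigenspace H c))
    (hE : ∀ v : M, ∃ n : ℕ, (E ^ n) v = 0) (hF : ∀ v : M, ∃ n : ℕ, (F ^ n) v = 0)
    (c : ℂ) :
    Module.finrank ℂ (Module.End.eigenspace H c)
      = Module.finrank ℂ (Module.End.eigenspace H (-c)) := by
  suffices hle : ∀ a : ℂ, Module.finrank ℂ (Module.End.eigenspace H a)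
      ≤ Module.finrank ℂ (Module.End.eigenspace H (-a)) by
    refine le_antisymm (hle c) ?_
    have := hle (-c)
    rwa [neg_neg] at this
  intro a
  have hG : ∀ v : M, ∃ n : ℕ, ((-F) ^ n) v = 0 := by
    intro v
    obtain ⟨n, hn⟩ := hF v
    refine ⟨n, ?_⟩
    rw [neg_pow, Module.End.mul_apply, hn, map_zero]
  -- multiplicative versions of the bracket relations
  have hHE' := hHE; rw [Ring.lie_def] at hHE'
  have hHF' := hHF; rw [Ring.lie_def] at hHF'
  have hEF' := hEF; rw [Ring.lie_def] at hEF'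
  have c1 : E * H = H * E + (-2:ℂ) • E := by
    rw [neg_smul, ← hHE']; abel
  have c2 : (-F) * H = H * (-F) + (2:ℂ) • (-F) := by
    have h2 : F * H - H * F = (2:ℂ) • F := by
      have h3 := congrArg (fun t => -t) hHF'
      simp only [neg_sub, neg_smul, neg_neg] at h3
      exact h3
    rw [neg_mul, mul_neg, smul_neg, ← h2]; abel
  have c3 : E * F = F * E + H := by
    rw [← hEF']; abel
  have c4 : (-F) * E = E * (-F) + H := by
    rw [neg_mul, mul_neg, ← hEF']; abel
  set EE := lnExp E hE with hEE
  set GG := lnExp (-F) hG with hGG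
  have r1 : EE * H = (H + (-2:ℂ) • E) * EE := lnExp_comm1 hE H (-2) c1
  have r2 : GG * H = (H + (2:ℂ) • (-F)) * GG := lnExp_comm1 hG H 2 c2
  have r4 : GG * E = (E + H + ((2:ℂ)/2) • (-F)) * GG := lnExp_comm2 hG E H 2 c4 c2
  have r5 : EE * E = E * EE := by
    have := lnExp_comm1 hE E 0 (by rw [zero_smul, add_zero])
    simpa using this
  set σ := EE * GG * EE with hσ
  have s2 : GG * (H + (-2:ℂ) • E) = ((-1:ℂ) • H + (-2:ℂ) • E) * GG := by
    rw [mul_add, mul_smul_comm, r2, r4, ← smul_mul_assoc, ← add_mul]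
    congr 1
    module
  have s3 : EE * ((-1:ℂ) • H + (-2:ℂ) • E) = ((-1:ℂ) • H) * EE := by
    rw [mul_add, mul_smul_comm, mul_smul_comm, r1, r5, ← smul_mul_assoc, ← smul_mul_assoc,
      ← add_mul]
    congr 1
    module
  have hσH : σ * H = ((-1:ℂ) • H) * σ := by
    calc σ * H = EE * (GG * (EE * H)) := by rw [hσ, mul_assoc, mul_assoc]
    _ = EE * (GG * ((H + (-2:ℂ) • E) * EE)) := by rw [r1]
    _ = EE * ((GG * (H + (-2:ℂ) • E)) * EE) := by rw [← mul_assoc GG]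
    _ = EE * ((((-1:ℂ) • H + (-2:ℂ) • E) * GG) * EE) := by rw [s2]
    _ = (EE * ((-1:ℂ) • H + (-2:ℂ) • E)) * (GG * EE) := by
        rw [mul_assoc, ← mul_assoc EE]
    _ = (((-1:ℂ) • H) * EE) * (GG * EE) := by rw [s3]
    _ = ((-1:ℂ) • H) * σ := by rw [hσ, mul_assoc, mul_assoc]
  have hσinj : Function.Injective σ := by
    have : ⇑σ = ⇑EE ∘ ⇑GG ∘ ⇑EE := by
      funext w
      simp only [hσ, Module.End.mul_apply, Function.comp_apply]
    rw [this]
    exact (lnExp_injective E hE).comp ((lnExp_injective (-F) hG).comp (lnExp_injective E hE))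
  have hmap : ∀ w ∈ Module.End.eigenspace H a, σ w ∈ Module.End.eigenspace H (-a) := by
    intro w hw
    rw [Module.End.mem_eigenspace_iff] at hw ⊢
    have h0 : σ (H w) = -(H (σ w)) := by
      calc σ (H w) = (σ * H) w := rfl
      _ = ((-1:ℂ) • H * σ) w := LinearMap.ext_iff.mp hσH w
      _ = -(H (σ w)) := by rw [Module.End.mul_apply, LinearMap.smul_apply, neg_one_smul]
    rw [hw, map_smul] at h0
    have h2 := congrArg (fun t => -t) h0
    simp only [neg_neg] at h2
    rw [← h2, ← neg_smul]
  haveI := hfd a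
  haveI := hfd (-a)
  have hrinj : Function.Injective (σ.restrict hmap) := by
    intro x y hxy
    have := congrArg Subtype.val hxy
    simp only [LinearMap.restrict_coe_apply] at this
    exact Subtype.ext (hσinj this)
  exact LinearMap.finrank_le_finrank_of_injective hrinj

end Stmt12Aux

/-- Let `t = sl₂ × a` (with `a` abelian, acting through the
Cartan element `H`) act on a module `M` in a category-`O` type setting:
`H` acts semisimply with finite-dimensional eigenspaces, `E` acts locally
nilpotently, and the weights lie in finitely many strings `μ − 2ℕ` — so that at
the level of characters `M = ⊕_μ [M : L_t(μ)] L_t(μ)`.  Then the following are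
equivalent for the negative root vector `F` of the `sl₂`-factor with root `γ`:
(a) `F` acts locally nilpotently on `M`;
(b) `(e^{γ/2} − e^{−γ/2}) ch M` is anti-invariant under `s_γ`; in terms of the
weight-multiplicity function `d(c) = dim M_c` (weights recorded by their
`H`-eigenvalue, `e^{γ/2}` shifting the eigenvalue by `1` and `s_γ` negating
it), this reads `d(−x−1) − d(−x+1) = −(d(x−1) − d(x+1))` for all `x`. -/
theorem stmt_12
    (M : Type*) [AddCommGroup M] [Module ℂ M]
    (E F H : Module.End ℂ M)
    (hHE : ⁅H, E⁆ = (2 : ℂ) • E) (hHF : ⁅H, F⁆ = (-2 : ℂ) • F) (hEF : ⁅E, F⁆ = H)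
    -- H acts semisimply with finite-dimensional eigenspaces
    (hss : (⨆ c : ℂ, Module.End.eigenspace H c) = ⊤)
    (hfd : ∀ c : ℂ, FiniteDimensional ℂ (Module.End.eigenspace H c))
    -- E acts locally nilpotently
    (hE : ∀ v : M, ∃ n : ℕ, (E ^ n) v = 0)
    -- category O support condition: weights lie in finitely many strings μ − 2ℕ
    (S : Finset ℂ)
    (hsupp : ∀ c : ℂ, Module.End.eigenspace H c ≠ ⊥ →
      ∃ μ ∈ S, ∃ n : ℕ, c = μ - 2 * n) :
    (∀ v : M, ∃ n : ℕ, (F ^ n) v = 0) ↔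
      (∀ x : ℂ,
        (Module.finrank ℂ (Module.End.eigenspace H (-x - 1)) : ℤ) -
          (Module.finrank ℂ (Module.End.eigenspace H (-x + 1)) : ℤ) =
        -((Module.finrank ℂ (Module.End.eigenspace H (x - 1)) : ℤ) -
          (Module.finrank ℂ (Module.End.eigenspace H (x + 1)) : ℤ))) := by
  -- strings are bounded above
  have up : ∀ c : ℂ, ∃ N : ℕ, ∀ n : ℕ, N ≤ n → Module.End.eigenspace H (c + 2*n) = ⊥ := by
    intro c
    refine ⟨S.sup (fun μ => ⌈(μ - c).re / 2⌉₊ + 1), fun n hn => ?_⟩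
    by_contra hne
    obtain ⟨μ, hμS, m, hm⟩ := hsupp _ hne
    have hreal : μ - c = (((2*n + 2*m : ℕ) : ℂ)) := by
      push_cast
      linear_combination -hm
    have hceil : ⌈(μ - c).re / 2⌉₊ = n + m := by
      have h1 : (μ - c).re / 2 = ((n + m : ℕ) : ℝ) := by
        rw [hreal, Complex.natCast_re]
        push_cast
        ring
      rw [h1, Nat.ceil_natCast]
    have h2 : ⌈(μ - c).re / 2⌉₊ + 1 ≤ S.sup (fun μ => ⌈(μ - c).re / 2⌉₊ + 1) :=
      Finset.le_sup (f := fun μ => ⌈(μ - c).re / 2⌉₊ + 1) hμS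
    omega
  constructor
  · -- (a) → (b)
    intro hF x
    have key := weyl_symmetry E F H hHE hHF hEF hfd hE hF
    have h1 := key (x - 1)
    have h2 := key (x + 1)
    rw [show -(x - 1) = -x + 1 from by ring] at h1
    rw [show -(x + 1) = -x - 1 from by ring] at h2
    omega
  · -- (b) → (a)
    intro hb
    -- symmetry of weight multiplicities
    have hsym : ∀ c : ℂ, (Module.finrank ℂ (Module.End.eigenspace H c) : ℤ)
        = (Module.finrank ℂ (Module.End.eigenspace H (-c)) : ℤ) := by
      intro c
      set d : ℂ → ℤ := fun b => (Module.finrank ℂ (Module.End.eigenspace H b) : ℤ) with hd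
      set A : ℤ → ℤ := fun n => d (c + 2*n) - d (-c - 2*n) with hA
      have hstep : ∀ n : ℤ, A (n + 1) = A n := by
        intro n
        have h1 := hb (c + 2*(n:ℂ) + 1)
        rw [show -(c + 2*(n:ℂ) + 1) - 1 = -c - (2*(n:ℂ) + 2) from by ring,
            show -(c + 2*(n:ℂ) + 1) + 1 = -c - 2*(n:ℂ) from by ring,
            show c + 2*(n:ℂ) + 1 - 1 = c + 2*(n:ℂ) from by ring,
            show c + 2*(n:ℂ) + 1 + 1 = c + (2*(n:ℂ) + 2) from by ring] at h1
        simp only [hA, hd]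
        rw [show (((n + 1 : ℤ)):ℂ) = (n:ℂ) + 1 from by push_cast; ring]
        rw [show c + 2*((n:ℂ) + 1) = c + (2*(n:ℂ) + 2) from by ring,
            show -c - 2*((n:ℂ) + 1) = -c - (2*(n:ℂ) + 2) from by ring]
        omega
      have hconst : ∀ n : ℤ, A n = A 0 := by
        intro n
        induction n using Int.induction_on with
        | zero => rfl
        | succ k ih => rw [hstep (k : ℤ)]; exact ih
        | pred k ih =>
            have h1 := hstep (-(k:ℤ) - 1)
            rw [show -(k:ℤ) - 1 + 1 = -(k:ℤ) from by ring] at h1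
            rw [h1] at ih
            exact ih
      obtain ⟨N1, hN1⟩ := up c
      obtain ⟨N2, hN2⟩ := up (-c)
      have hA1 : A (N1 : ℤ) = - d (-c - 2*(N1:ℕ)) := by
        simp only [hA, hd]
        rw [show ((N1:ℤ):ℂ) = ((N1:ℕ):ℂ) from by push_cast; ring]
        rw [hN1 N1 le_rfl]
        simp
      have hA2 : A (-(N2:ℤ)) = d (c - 2*(N2:ℕ)) := by
        simp only [hA, hd]
        rw [show (((-(N2:ℤ)):ℤ):ℂ) = -((N2:ℕ):ℂ) from by push_cast; ring]
        rw [show c + 2*(-((N2:ℕ):ℂ)) = c - 2*(N2:ℕ) from by ring,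
            show -c - 2*(-((N2:ℕ):ℂ)) = -c + 2*(N2:ℕ) from by ring]
        rw [hN2 N2 le_rfl]
        simp
      have e1 := hconst (N1 : ℤ)
      have e2 := hconst (-(N2:ℤ))
      have h0 : A 0 = d c - d (-c) := by
        simp only [hA, hd]
        rw [show c + 2*(((0:ℤ)):ℂ) = c from by push_cast; ring,
            show -c - 2*(((0:ℤ)):ℂ) = -c from by push_cast; ring]
      have hd1 : 0 ≤ d (-c - 2*(N1:ℕ)) := by simp only [hd]; positivity
      have hd2 : 0 ≤ d (c - 2*(N2:ℕ)) := by simp only [hd]; positivity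
      have : A 0 = 0 := by omega
      simp only [hd] at h0 ⊢
      omega
    -- F sends the a-eigenspace to the (a-2)-eigenspace
    have hstep : ∀ (b : ℂ) (w : M), w ∈ Module.End.eigenspace H b →
        F w ∈ Module.End.eigenspace H (b - 2) := by
      intro b w hw
      rw [Module.End.mem_eigenspace_iff] at hw ⊢
      have hHF' := hHF
      rw [Ring.lie_def] at hHF'
      have h1 : (H * F) w = (F * H) w + ((-2:ℂ) • F) w := by
        rw [show H * F = F * H + (-2:ℂ) • F from by rw [← hHF']; abel]
        simp
      rw [Module.End.mul_apply, Module.End.mul_apply, hw, map_smul, LinearMap.smul_apply] at h1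
      rw [h1, sub_smul]
      module
    have hFwt : ∀ (a : ℂ) (v : M), v ∈ Module.End.eigenspace H a → ∀ n : ℕ,
        (F ^ n) v ∈ Module.End.eigenspace H (a - 2*n) := by
      intro a v hv n
      induction n with
      | zero => simpa using hv
      | succ n ih =>
        have h2 := hstep _ _ ih
        have h3 : (F ^ (n+1)) v = F ((F ^ n) v) := by
          rw [pow_succ', Module.End.mul_apply]
        rw [h3, show a - 2*((n+1 : ℕ):ℂ) = a - 2*(n:ℕ) - 2 from by push_cast; ring]
        exact h2
    -- local nilpotency on each weight vector
    have main : ∀ (a : ℂ) (w : M), w ∈ Module.End.eigenspace H a → ∃ n : ℕ, (F ^ n) w = 0 := by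
      intro a w hw
      obtain ⟨N, hN⟩ := up (-a)
      refine ⟨N, ?_⟩
      have h1 := hFwt a w hw N
      have h2 : Module.End.eigenspace H (a - 2*(N:ℕ)) = ⊥ := by
        haveI := hfd (a - 2*(N:ℕ))
        have h3 := hsym (a - 2*(N:ℕ))
        rw [show -(a - 2*((N:ℕ):ℂ)) = -a + 2*(N:ℕ) from by ring, hN N le_rfl] at h3
        simp only [finrank_bot] at h3
        apply Submodule.finrank_eq_zero.mp
        omega
      rw [h2] at h1
      simpa using h1
    -- extend to all of M
    intro v
    let 𝔑 : Submodule ℂ M :=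
      { carrier := {w | ∃ n : ℕ, (F ^ n) w = 0}
        add_mem' := by
          rintro a b ⟨n, hn⟩ ⟨m, hm⟩
          exact ⟨max n m, by
            rw [map_add, pow_apply_zero_mono hn (le_max_left n m),
              pow_apply_zero_mono hm (le_max_right n m), add_zero]⟩
        zero_mem' := ⟨0, by simp⟩
        smul_mem' := by
          rintro c a ⟨n, hn⟩
          exact ⟨n, by rw [map_smul, hn, smul_zero]⟩ }
    have hle : (⨆ c : ℂ, Module.End.eigenspace H c) ≤ 𝔑 :=
      iSup_le fun c => fun w hw => main c w hw
    have hv : v ∈ 𝔑 := hle (by rw [hss]; trivial)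
    exact hv
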